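/- For u, v ∈ H²(Ω), a scalar Lipschitz coefficient α, and a Lipschitz vector field V, the following pointwise identity holds: −(∇α·V)(∇u·∇v) − α A ∇u·∇v = div( α(V·∇u)∇v + α(V·∇v)∇u − α(∇u·∇v)V ) − (V·∇u) div(α∇v) − (V·∇v) div(α∇u), where A = (div V) id − DV − (DV)^⊤. -/

import Mathlib

/-- The gradient of `f : ℝ^d → ℝ` as a vector: `(pgrad f x) i = ∂_i f (x)`. -/
noncomputable def pgrad {d : ℕ} (f : (Fin d → ℝ) → ℝ) (x : Fin d → ℝ) : Fin d → ℝ :=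
  fun i => fderiv ℝ f x (Pi.single i 1)

/-- Divergence of a vector field `W : ℝ^d → ℝ^d`. -/
noncomputable def pdiv {d : ℕ} (W : (Fin d → ℝ) → (Fin d → ℝ)) (x : Fin d → ℝ) : ℝ :=
  ∑ i, fderiv ℝ (fun y => W y i) x (Pi.single i 1)

/-- Euclidean dot product. -/
def dotp {d : ℕ} (a b : Fin d → ℝ) : ℝ := ∑ i, a i * b i

section helpers
variable {E : Type*} [NormedAddCommGroup E] [NormedSpace ℝ E] {x : E}

lemma fd_mul {f g : E → ℝ} (hf : DifferentiableAt ℝ f x) (hg : DifferentiableAt ℝ g x) (w : E) :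
    fderiv ℝ (fun y => f y * g y) x w = fderiv ℝ f x w * g x + f x * fderiv ℝ g x w := by
  rw [fderiv_fun_mul hf hg]
  simp only [ContinuousLinearMap.add_apply, ContinuousLinearMap.coe_smul', Pi.smul_apply,
    smul_eq_mul]
  ring

lemma fd_add {f g : E → ℝ} (hf : DifferentiableAt ℝ f x) (hg : DifferentiableAt ℝ g x) (w : E) :
    fderiv ℝ (fun y => f y + g y) x w = fderiv ℝ f x w + fderiv ℝ g x w := by
  rw [fderiv_fun_add hf hg]; simp

lemma fd_sub {f g : E → ℝ} (hf : DifferentiableAt ℝ f x) (hg : DifferentiableAt ℝ g x) (w : E) :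
    fderiv ℝ (fun y => f y - g y) x w = fderiv ℝ f x w - fderiv ℝ g x w := by
  rw [fderiv_fun_sub hf hg]; simp

lemma fd_sum {n : ℕ} {F : Fin n → E → ℝ} (h : ∀ j, DifferentiableAt ℝ (F j) x) (w : E) :
    fderiv ℝ (fun y => ∑ j, F j y) x w = ∑ j, fderiv ℝ (F j) x w := by
  rw [fderiv_fun_sum fun j _ => h j]; simp
end helpers


lemma alg {d : ℕ} (a : ℝ) (A Vx U W : Fin d → ℝ) (DV HU HV : Fin d → Fin d → ℝ)
    (hHU : ∀ i j, HU i j = HU j i) (hHV : ∀ i j, HV i j = HV j i) :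
    -(∑ i, A i * Vx i) * (∑ i, U i * W i)
      - a * ((∑ i, DV i i) * (∑ i, U i * W i)
          - (∑ i, ∑ j, DV j i * U j * W i)
          - (∑ i, ∑ j, DV i j * U j * W i))
    = (∑ i,
        ((A i * (∑ j, Vx j * U j) + a * ∑ j, (DV i j * U j + Vx j * HU i j)) * W i
          + (a * ∑ j, Vx j * U j) * HV i i
          + ((A i * (∑ j, Vx j * W j) + a * ∑ j, (DV i j * W j + Vx j * HV i j)) * U i
            + (a * ∑ j, Vx j * W j) * HU i i)
          - ((A i * (∑ j, U j * W j) + a * ∑ j, (HU i j * W j + U j * HV i j)) * Vx i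
            + (a * ∑ j, U j * W j) * DV i i)))
      - (∑ j, Vx j * U j) * (∑ i, (A i * W i + a * HV i i))
      - (∑ j, Vx j * W j) * (∑ i, (A i * U i + a * HU i i)) := by
  have h1 : ∑ i, ∑ j, a * HU i j * W j * Vx i = ∑ i, ∑ j, a * Vx j * HU i j * W i := by
    rw [Finset.sum_comm]
    exact Finset.sum_congr rfl fun j _ => Finset.sum_congr rfl fun i _ => by rw [hHU i j]; ring
  have h2 : ∑ i, ∑ j, a * U j * HV i j * Vx i = ∑ i, ∑ j, a * Vx j * HV i j * U i := by
    rw [Finset.sum_comm]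
    exact Finset.sum_congr rfl fun j _ => Finset.sum_congr rfl fun i _ => by rw [hHV i j]; ring
  have h3 : ∑ i, ∑ j, a * DV i j * W j * U i = ∑ i, ∑ j, a * DV j i * U j * W i := by
    rw [Finset.sum_comm]
    exact Finset.sum_congr rfl fun j _ => Finset.sum_congr rfl fun i _ => by ring
  have h4 : ∑ i, ∑ j, a * U j * W j * DV i i = ∑ i, ∑ j, a * DV j j * U i * W i := by
    rw [Finset.sum_comm]
    exact Finset.sum_congr rfl fun j _ => Finset.sum_congr rfl fun i _ => by ring
  have h5 : ∑ i, ∑ j, A i * U j * W j * Vx i = ∑ i, ∑ j, A j * Vx j * U i * W i := by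
    rw [Finset.sum_comm]
    exact Finset.sum_congr rfl fun j _ => Finset.sum_congr rfl fun i _ => by ring
  simp only [Finset.sum_add_distrib, Finset.sum_sub_distrib, add_mul, sub_mul, mul_add, mul_sub,
    Finset.mul_sum, Finset.sum_mul]
  ring_nf
  ring_nf at h1 h2 h3 h4 h5
  rw [h1, h2, h3, h4, h5]
  have h6 : ∑ i, ∑ j, Vx j * U j * A i * W i = ∑ i, ∑ j, A i * Vx j * U j * W i :=
    Finset.sum_congr rfl fun i _ => Finset.sum_congr rfl fun j _ => by ring
  have h7 : ∑ i, ∑ j, Vx j * U j * a * HV i i = ∑ i, ∑ j, a * Vx j * U j * HV i i :=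
    Finset.sum_congr rfl fun i _ => Finset.sum_congr rfl fun j _ => by ring
  have h8 : ∑ i, ∑ j, Vx j * W j * A i * U i = ∑ i, ∑ j, A i * Vx j * W j * U i :=
    Finset.sum_congr rfl fun i _ => Finset.sum_congr rfl fun j _ => by ring
  have h9 : ∑ i, ∑ j, Vx j * W j * a * HU i i = ∑ i, ∑ j, a * Vx j * W j * HU i i :=
    Finset.sum_congr rfl fun i _ => Finset.sum_congr rfl fun j _ => by ring
  have h10 : ∑ i, -((∑ j, A j * Vx j) * U i * W i) = -∑ i, ∑ j, A j * Vx j * U i * W i := by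
    rw [← Finset.sum_neg_distrib]
    exact Finset.sum_congr rfl fun i _ => by rw [Finset.sum_mul, Finset.sum_mul]
  rw [h6, h8, h10]
  ring


/-- For `u, v ∈ H²` (here `C²`), a differentiable scalar
coefficient `α` and a differentiable vector field `V`, with
`A = (div V) id − DV − (DV)ᵀ`, the pointwise identity
`−(∇α·V)(∇u·∇v) − α A∇u·∇v
  = div( α(V·∇u)∇v + α(V·∇v)∇u − α(∇u·∇v)V )
      − (V·∇u) div(α∇v) − (V·∇v) div(α∇u)` holds. -/
theorem statement_14 {d : ℕ}
    (u v : (Fin d → ℝ) → ℝ) (hu : ContDiff ℝ 2 u) (hv : ContDiff ℝ 2 v)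
    (α : (Fin d → ℝ) → ℝ) (hα : Differentiable ℝ α)
    (V : (Fin d → ℝ) → (Fin d → ℝ)) (hV : Differentiable ℝ V) :
    ∀ x : Fin d → ℝ,
      -(dotp (pgrad α x) (V x)) * dotp (pgrad u x) (pgrad v x)
        - α x * (pdiv V x * dotp (pgrad u x) (pgrad v x)
            - (∑ i, ∑ j, (fderiv ℝ (fun y => V y i) x (Pi.single j 1))
                * pgrad u x j * pgrad v x i)
            - (∑ i, ∑ j, (fderiv ℝ (fun y => V y j) x (Pi.single i 1))
                * pgrad u x j * pgrad v x i))
      = pdiv (fun y =>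
            (α y * dotp (V y) (pgrad u y)) • pgrad v y
              + (α y * dotp (V y) (pgrad v y)) • pgrad u y
              - (α y * dotp (pgrad u y) (pgrad v y)) • V y) x
        - dotp (V x) (pgrad u x) * pdiv (fun y => α y • pgrad v y) x
        - dotp (V x) (pgrad v x) * pdiv (fun y => α y • pgrad u y) x := by
  intro x
  -- basic differentiability facts
  have hVj : ∀ j, Differentiable ℝ (fun y => V y j) := fun j => differentiable_pi.mp hV j
  have hfu : ContDiff ℝ 1 (fderiv ℝ u) := hu.fderiv_right (by norm_num)
  have hfv : ContDiff ℝ 1 (fderiv ℝ v) := hv.fderiv_right (by norm_num)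
  have hgu : ∀ j, Differentiable ℝ (fun y => fderiv ℝ u y (Pi.single j 1)) :=
    fun j => (hfu.clm_apply contDiff_const).differentiable one_ne_zero
  have hgv : ∀ j, Differentiable ℝ (fun y => fderiv ℝ v y (Pi.single j 1)) :=
    fun j => (hfv.clm_apply contDiff_const).differentiable one_ne_zero
  have hdgu : ∀ (w : Fin d → ℝ) j,
      fderiv ℝ (fun y => fderiv ℝ u y (Pi.single j 1)) x w
        = fderiv ℝ (fderiv ℝ u) x w (Pi.single j 1) := by
    intro w j
    rw [fderiv_clm_apply ((hfu.differentiable one_ne_zero) x) (differentiableAt_const _)]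
    simp
  have hdgv : ∀ (w : Fin d → ℝ) j,
      fderiv ℝ (fun y => fderiv ℝ v y (Pi.single j 1)) x w
        = fderiv ℝ (fderiv ℝ v) x w (Pi.single j 1) := by
    intro w j
    rw [fderiv_clm_apply ((hfv.differentiable one_ne_zero) x) (differentiableAt_const _)]
    simp
  have hsymu : ∀ i j, fderiv ℝ (fderiv ℝ u) x (Pi.single i 1) (Pi.single j 1)
      = fderiv ℝ (fderiv ℝ u) x (Pi.single j 1) (Pi.single i 1) :=
    fun i j => (hu.contDiffAt.isSymmSndFDerivAt (by simp [minSmoothness_of_isRCLikeNormedField])) _ _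
  have hsymv : ∀ i j, fderiv ℝ (fderiv ℝ v) x (Pi.single i 1) (Pi.single j 1)
      = fderiv ℝ (fderiv ℝ v) x (Pi.single j 1) (Pi.single i 1) :=
    fun i j => (hv.contDiffAt.isSymmSndFDerivAt (by simp [minSmoothness_of_isRCLikeNormedField])) _ _
  -- differentiability of the dot-product functions
  have hDu : Differentiable ℝ (fun y => ∑ j, V y j * fderiv ℝ u y (Pi.single j 1)) :=
    Differentiable.fun_sum fun j _ => (hVj j).mul (hgu j)
  have hDv : Differentiable ℝ (fun y => ∑ j, V y j * fderiv ℝ v y (Pi.single j 1)) :=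
    Differentiable.fun_sum fun j _ => (hVj j).mul (hgv j)
  have hDuv : Differentiable ℝ
      (fun y => ∑ j, fderiv ℝ u y (Pi.single j 1) * fderiv ℝ v y (Pi.single j 1)) :=
    Differentiable.fun_sum fun j _ => (hgu j).mul (hgv j)
  -- derivatives of the dot-product functions
  have dDotu : ∀ w, fderiv ℝ (fun y => ∑ j, V y j * fderiv ℝ u y (Pi.single j 1)) x w
      = ∑ j, (fderiv ℝ (fun y => V y j) x w * fderiv ℝ u x (Pi.single j 1)
          + V x j * fderiv ℝ (fderiv ℝ u) x w (Pi.single j 1)) := by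
    intro w
    rw [fd_sum (fun j => ((hVj j).fun_mul (hgu j)) x) w]
    exact Finset.sum_congr rfl fun j _ => by rw [fd_mul ((hVj j) x) ((hgu j) x) w, hdgu w j]
  have dDotv : ∀ w, fderiv ℝ (fun y => ∑ j, V y j * fderiv ℝ v y (Pi.single j 1)) x w
      = ∑ j, (fderiv ℝ (fun y => V y j) x w * fderiv ℝ v x (Pi.single j 1)
          + V x j * fderiv ℝ (fderiv ℝ v) x w (Pi.single j 1)) := by
    intro w
    rw [fd_sum (fun j => ((hVj j).fun_mul (hgv j)) x) w]
    exact Finset.sum_congr rfl fun j _ => by rw [fd_mul ((hVj j) x) ((hgv j) x) w, hdgv w j]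
  have dDotuv : ∀ w, fderiv ℝ
      (fun y => ∑ j, fderiv ℝ u y (Pi.single j 1) * fderiv ℝ v y (Pi.single j 1)) x w
      = ∑ j, (fderiv ℝ (fderiv ℝ u) x w (Pi.single j 1) * fderiv ℝ v x (Pi.single j 1)
          + fderiv ℝ u x (Pi.single j 1) * fderiv ℝ (fderiv ℝ v) x w (Pi.single j 1)) := by
    intro w
    rw [fd_sum (fun j => ((hgu j).fun_mul (hgv j)) x) w]
    exact Finset.sum_congr rfl fun j _ => by
      rw [fd_mul ((hgu j) x) ((hgv j) x) w, hdgu w j, hdgv w j]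
  -- the three simple divergences
  have hdiv2 : pdiv (fun y => α y • pgrad v y) x
      = ∑ i, (fderiv ℝ α x (Pi.single i 1) * fderiv ℝ v x (Pi.single i 1)
          + α x * fderiv ℝ (fderiv ℝ v) x (Pi.single i 1) (Pi.single i 1)) := by
    unfold pdiv
    refine Finset.sum_congr rfl fun i _ => ?_
    have h : (fun y => (α y • pgrad v y) i)
        = fun y => α y * fderiv ℝ v y (Pi.single i 1) := by
      funext y; simp [pgrad]
    rw [h, fd_mul (hα x) ((hgv i) x), hdgv _ i]
  have hdiv3 : pdiv (fun y => α y • pgrad u y) x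
      = ∑ i, (fderiv ℝ α x (Pi.single i 1) * fderiv ℝ u x (Pi.single i 1)
          + α x * fderiv ℝ (fderiv ℝ u) x (Pi.single i 1) (Pi.single i 1)) := by
    unfold pdiv
    refine Finset.sum_congr rfl fun i _ => ?_
    have h : (fun y => (α y • pgrad u y) i)
        = fun y => α y * fderiv ℝ u y (Pi.single i 1) := by
      funext y; simp [pgrad]
    rw [h, fd_mul (hα x) ((hgu i) x), hdgu _ i]
  -- the big divergence
  have hdiv1 : pdiv (fun y =>
            (α y * dotp (V y) (pgrad u y)) • pgrad v y
              + (α y * dotp (V y) (pgrad v y)) • pgrad u y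
              - (α y * dotp (pgrad u y) (pgrad v y)) • V y) x
      = ∑ i,
        ((fderiv ℝ α x (Pi.single i 1) * (∑ j, V x j * fderiv ℝ u x (Pi.single j 1))
            + α x * ∑ j, (fderiv ℝ (fun y => V y j) x (Pi.single i 1) * fderiv ℝ u x (Pi.single j 1)
                + V x j * fderiv ℝ (fderiv ℝ u) x (Pi.single i 1) (Pi.single j 1))) * fderiv ℝ v x (Pi.single i 1)
          + (α x * ∑ j, V x j * fderiv ℝ u x (Pi.single j 1))
              * fderiv ℝ (fderiv ℝ v) x (Pi.single i 1) (Pi.single i 1)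
          + ((fderiv ℝ α x (Pi.single i 1) * (∑ j, V x j * fderiv ℝ v x (Pi.single j 1))
            + α x * ∑ j, (fderiv ℝ (fun y => V y j) x (Pi.single i 1) * fderiv ℝ v x (Pi.single j 1)
                + V x j * fderiv ℝ (fderiv ℝ v) x (Pi.single i 1) (Pi.single j 1))) * fderiv ℝ u x (Pi.single i 1)
            + (α x * ∑ j, V x j * fderiv ℝ v x (Pi.single j 1))
                * fderiv ℝ (fderiv ℝ u) x (Pi.single i 1) (Pi.single i 1))
          - ((fderiv ℝ α x (Pi.single i 1) * (∑ j, fderiv ℝ u x (Pi.single j 1) * fderiv ℝ v x (Pi.single j 1))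
            + α x * ∑ j, (fderiv ℝ (fderiv ℝ u) x (Pi.single i 1) (Pi.single j 1) * fderiv ℝ v x (Pi.single j 1)
                + fderiv ℝ u x (Pi.single j 1) * fderiv ℝ (fderiv ℝ v) x (Pi.single i 1) (Pi.single j 1))) * V x i
            + (α x * ∑ j, fderiv ℝ u x (Pi.single j 1) * fderiv ℝ v x (Pi.single j 1))
                * fderiv ℝ (fun y => V y i) x (Pi.single i 1))) := by
    unfold pdiv
    refine Finset.sum_congr rfl fun i _ => ?_
    have h : (fun y =>
          ((α y * dotp (V y) (pgrad u y)) • pgrad v y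
            + (α y * dotp (V y) (pgrad v y)) • pgrad u y
            - (α y * dotp (pgrad u y) (pgrad v y)) • V y) i)
        = fun y =>
          ((α y * ∑ j, V y j * fderiv ℝ u y (Pi.single j 1)) * fderiv ℝ v y (Pi.single i 1)
            + (α y * ∑ j, V y j * fderiv ℝ v y (Pi.single j 1)) * fderiv ℝ u y (Pi.single i 1))
            - (α y * ∑ j, fderiv ℝ u y (Pi.single j 1) * fderiv ℝ v y (Pi.single j 1)) * V y i := by
      funext y; simp [pgrad, dotp]
    rw [h]
    rw [fd_sub (((hα.fun_mul hDu).fun_mul (hgv i)).fun_add ((hα.fun_mul hDv).fun_mul (hgu i)) x)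
        (((hα.fun_mul hDuv).fun_mul (hVj i)) x)]
    rw [fd_add (((hα.fun_mul hDu).fun_mul (hgv i)) x) (((hα.fun_mul hDv).fun_mul (hgu i)) x)]
    rw [fd_mul ((hα.fun_mul hDu) x) ((hgv i) x), fd_mul ((hα.fun_mul hDv) x) ((hgu i) x),
      fd_mul ((hα.fun_mul hDuv) x) ((hVj i) x)]
    rw [fd_mul (hα x) (hDu x), fd_mul (hα x) (hDv x), fd_mul (hα x) (hDuv x)]
    rw [dDotu, dDotv, dDotuv, hdgu _ i, hdgv _ i]
  rw [hdiv1, hdiv2, hdiv3]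
  exact alg (α x) (fun i => fderiv ℝ α x (Pi.single i 1)) (V x)
    (fun j => fderiv ℝ u x (Pi.single j 1)) (fun j => fderiv ℝ v x (Pi.single j 1))
    (fun i j => fderiv ℝ (fun y => V y j) x (Pi.single i 1))
    (fun i j => fderiv ℝ (fderiv ℝ u) x (Pi.single i 1) (Pi.single j 1))
    (fun i j => fderiv ℝ (fderiv ℝ v) x (Pi.single i 1) (Pi.single j 1))
    hsymu hsymv
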